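/- Let X₁, X₂, X₃ : Ω → Bool be mutually independent random variables on a probability space (Ω, P), with X₁ and X₂ each uniformly distributed on Bool and P(X₃ = true) = f for some f ∈ [0,1], and let Y = (X₁ XOR X₂) OR X₃. Then X₁ and Y are independent, and X₂ and Y are independent, for every value of f. -/

import Mathlib

open MeasureTheory ProbabilityTheory

lemma bool_set_cases (s : Set Bool) :
    s = ∅ ∨ s = {true} ∨ s = {false} ∨ s = Set.univ := by
  by_cases ht : true ∈ s <;> by_cases hf : false ∈ s
  · right; right; right; ext x; cases x <;> simp [ht, hf]
  · right; left; ext x; cases x <;> simp [ht, hf]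
  · right; right; left; ext x; cases x <;> simp [ht, hf]
  · left; ext x; cases x <;> simp [ht, hf]

lemma aux_compl_right {Ω : Type*} [MeasurableSpace Ω] {P : Measure Ω}
    [IsProbabilityMeasure P] {A B : Set Ω} (hA : MeasurableSet A) (hB : MeasurableSet B)
    (h : P (A ∩ B) = P A * P B) : P (A ∩ Bᶜ) = P A * P Bᶜ := by
  have h1 : A ∩ Bᶜ = A \ (A ∩ B) := by rw [Set.diff_self_inter, Set.diff_eq]
  rw [h1, measure_diff Set.inter_subset_left (hA.inter hB).nullMeasurableSet (measure_ne_top _ _),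
    h, prob_compl_eq_one_sub hB, ENNReal.mul_sub (fun _ _ => measure_ne_top _ _), mul_one]

lemma indepFun_bool_of {Ω : Type*} [MeasurableSpace Ω] {P : Measure Ω}
    [IsProbabilityMeasure P] {X Z : Ω → Bool} (hX : Measurable X) (hZ : Measurable Z)
    (h : P (X ⁻¹' {true} ∩ Z ⁻¹' {false}) = P (X ⁻¹' {true}) * P (Z ⁻¹' {false})) :
    IndepFun X Z P := by
  have hXt : MeasurableSet (X ⁻¹' {true}) := hX (by trivial)
  have hZf : MeasurableSet (Z ⁻¹' {false}) := hZ (by trivial)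
  have eXf : X ⁻¹' {false} = (X ⁻¹' {true})ᶜ := by
    ext ω; cases hb : X ω <;> simp [hb]
  have eZt : Z ⁻¹' {true} = (Z ⁻¹' {false})ᶜ := by
    ext ω; cases hb : Z ω <;> simp [hb]
  have h2 : P (X ⁻¹' {true} ∩ Z ⁻¹' {true}) = P (X ⁻¹' {true}) * P (Z ⁻¹' {true}) := by
    rw [eZt]; exact aux_compl_right hXt hZf h
  have h3 : P (X ⁻¹' {false} ∩ Z ⁻¹' {false}) = P (X ⁻¹' {false}) * P (Z ⁻¹' {false}) := by
    rw [eXf, Set.inter_comm, mul_comm]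
    exact aux_compl_right hZf hXt (by rw [Set.inter_comm, mul_comm (P _)] at h; exact h)
  have h4 : P (X ⁻¹' {false} ∩ Z ⁻¹' {true}) = P (X ⁻¹' {false}) * P (Z ⁻¹' {true}) := by
    rw [eXf, Set.inter_comm, mul_comm]
    exact aux_compl_right (hZ (by trivial)) hXt
      (by rw [Set.inter_comm, mul_comm (P _)] at h2; exact h2)
  rw [indepFun_iff_measure_inter_preimage_eq_mul]
  intro s t _ _
  rcases bool_set_cases s with rfl | rfl | rfl | rfl <;>
    rcases bool_set_cases t with rfl | rfl | rfl | rfl <;>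
      (try simp only [Set.preimage_univ, Set.preimage_empty, Set.univ_inter, Set.inter_univ,
        Set.empty_inter, Set.inter_empty, measure_univ, measure_empty, one_mul, mul_one,
        zero_mul, mul_zero]) <;>
      first | rfl | exact h | exact h2 | exact h3 | exact h4

lemma ennreal_half_sum (g : ENNReal) : 1/2 * (1/2) * g + 1/2 * (1/2) * g = 1/2 * g := by
  have h2 : (2:ENNReal) * (1/2) = 1 := by
    rw [mul_one_div]; exact ENNReal.div_self (by norm_num) (by norm_num)
  rw [← two_mul, ← mul_assoc, ← mul_assoc, h2, one_mul]

lemma ennreal_one_sub_half : (1:ENNReal) - 1/2 = 1/2 := by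
  have h : (1:ENNReal) = 1/2 + 1/2 := by
    rw [ENNReal.div_add_div_same, one_add_one_eq_two]
    exact (ENNReal.div_self (by norm_num) (by norm_num)).symm
  exact ENNReal.sub_eq_of_eq_add (by norm_num) h

/-- **Example 1 of the paper: failure of faithfulness.**
For mutually independent `X₁, X₂, X₃ : Ω → Bool` with `X₁, X₂` uniform,
`P(X₃ = true) = f` for some `f ∈ [0,1]`, and `Y = (X₁ XOR X₂) OR X₃`,
the variables `X₁` and `Y` are independent, and `X₂` and `Y` are independent. -/
theorem xor_or_faithfulness_fails {Ω : Type*} [MeasurableSpace Ω] {P : Measure Ω}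
    [IsProbabilityMeasure P] (X₁ X₂ X₃ : Ω → Bool)
    (hX₁ : Measurable X₁) (hX₂ : Measurable X₂) (hX₃ : Measurable X₃)
    (hIndep : iIndepFun ![X₁, X₂, X₃] P)
    (hu₁ : P (X₁ ⁻¹' {true}) = 1/2) (hu₂ : P (X₂ ⁻¹' {true}) = 1/2)
    (f : ENNReal) (hf : f ≤ 1) (hX₃f : P (X₃ ⁻¹' {true}) = f)
    (Y : Ω → Bool) (hY : Y = fun ω => (Bool.xor (X₁ ω) (X₂ ω)) || X₃ ω) :
    IndepFun X₁ Y P ∧ IndepFun X₂ Y P := by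
  have hYm : Measurable Y := by
    subst hY
    exact (Measurable.of_discrete
      (f := fun p : Bool × Bool × Bool => (Bool.xor p.1 p.2.1) || p.2.2)).comp
      (hX₁.prodMk (hX₂.prodMk hX₃))
  -- triple joint measure from mutual independence
  have key : ∀ (s1 s2 s3 : Set Bool),
      P (X₁ ⁻¹' s1 ∩ X₂ ⁻¹' s2 ∩ X₃ ⁻¹' s3)
        = P (X₁ ⁻¹' s1) * P (X₂ ⁻¹' s2) * P (X₃ ⁻¹' s3) := by
    intro s1 s2 s3
    have h := hIndep.measure_inter_preimage_eq_mul (S := Finset.univ)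
      (sets := ![s1, s2, s3]) (fun i _ => trivial)
    have e : (⋂ i, ![X₁,X₂,X₃] i ⁻¹' ![s1,s2,s3] i) = X₁ ⁻¹' s1 ∩ X₂ ⁻¹' s2 ∩ X₃ ⁻¹' s3 := by
      ext ω
      simp [Set.mem_iInter, Fin.forall_fin_succ, and_assoc]
    simpa [Fin.prod_univ_three, e, mul_assoc] using h
  -- marginals of the false-preimages
  have hu₁f : P (X₁ ⁻¹' {false}) = 1/2 := by
    have e : X₁ ⁻¹' {false} = (X₁ ⁻¹' {true})ᶜ := by
      ext ω; cases hb : X₁ ω <;> simp [hb]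
    rw [e, prob_compl_eq_one_sub (hX₁ (by trivial)), hu₁, ennreal_one_sub_half]
  have hu₂f : P (X₂ ⁻¹' {false}) = 1/2 := by
    have e : X₂ ⁻¹' {false} = (X₂ ⁻¹' {true})ᶜ := by
      ext ω; cases hb : X₂ ω <;> simp [hb]
    rw [e, prob_compl_eq_one_sub (hX₂ (by trivial)), hu₂, ennreal_one_sub_half]
  set g : ENNReal := P (X₃ ⁻¹' {false}) with hg
  -- decomposition of the event Y = false
  have hYf : Y ⁻¹' {false} =
      (X₁ ⁻¹' {true} ∩ X₂ ⁻¹' {true} ∩ X₃ ⁻¹' {false}) ∪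
      (X₁ ⁻¹' {false} ∩ X₂ ⁻¹' {false} ∩ X₃ ⁻¹' {false}) := by
    subst hY
    ext ω
    cases h1 : X₁ ω <;> cases h2 : X₂ ω <;> cases h3 : X₃ ω <;> simp [h1, h2, h3]
  have hdisj : Disjoint
      (X₁ ⁻¹' {true} ∩ X₂ ⁻¹' {true} ∩ X₃ ⁻¹' {false})
      (X₁ ⁻¹' {false} ∩ X₂ ⁻¹' {false} ∩ X₃ ⁻¹' {false}) := by
    rw [Set.disjoint_left]
    rintro ω ⟨⟨h1, _⟩, _⟩ ⟨⟨h1', _⟩, _⟩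
    simp_all
  have hPYf : P (Y ⁻¹' {false}) = 1/2 * g := by
    rw [hYf, measure_union hdisj
      (((hX₁ (by trivial)).inter (hX₂ (by trivial))).inter (hX₃ (by trivial))),
      key, key, hu₁, hu₂, hu₁f, hu₂f, ← hg, ennreal_half_sum]
  constructor
  · apply indepFun_bool_of hX₁ hYm
    have e : X₁ ⁻¹' {true} ∩ Y ⁻¹' {false}
        = X₁ ⁻¹' {true} ∩ X₂ ⁻¹' {true} ∩ X₃ ⁻¹' {false} := by
      subst hY
      ext ω
      cases h1 : X₁ ω <;> cases h2 : X₂ ω <;> cases h3 : X₃ ω <;> simp [h1, h2, h3]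
    rw [e, key, hu₁, hu₂, hPYf, ← hg, mul_assoc]
  · apply indepFun_bool_of hX₂ hYm
    have e : X₂ ⁻¹' {true} ∩ Y ⁻¹' {false}
        = X₁ ⁻¹' {true} ∩ X₂ ⁻¹' {true} ∩ X₃ ⁻¹' {false} := by
      subst hY
      ext ω
      cases h1 : X₁ ω <;> cases h2 : X₂ ω <;> cases h3 : X₃ ω <;> simp [h1, h2, h3]
    rw [e, key, hu₁, hu₂, hPYf, ← hg, mul_assoc]
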